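/- (Proposition 'semidirectPexp', matrix/chart version) Let γ, β : ℝ × E → 𝔄 be continuous and differentiable in the E-variable, let g : ℝ × E → 𝔄 be twice continuously differentiable with g(t,x) invertible for all (t,x) and ∂_t g(t,x) = g(t,x)·γ(t,x), and let τ : ℝ × E → 𝔄 be twice continuously differentiable with ∂_t τ(t,x) = β(t,x) − [γ(t,x), τ(t,x)] (the path τ_t = g_t⁻¹(∫₀ᵗ g_{t'} β_{t'} g_{t'}⁻¹ dt')g_t in the dual of the Lie algebra). Let A, B : E → (E →L[ℝ] 𝔄) be one-forms, set A(t) := A^{g_t} and B(t)(x)v := g(t,x)⁻¹·(B(x)v)·g(t,x) + (D_x τ(t,·))(x)v + [A(t)(x)v, τ(t,x)] (i.e. B(t) = g_t⁻¹ B g_t + d_{A(t)} τ_t). Then for every (t,x) and v ∈ E: ∂_t(B(t)(x)v) = −[γ(t,x), B(t)(x)v] + (D_x β(t,·))(x)v + [A(t)(x)v, β(t,x)]; that is, Ḃ(t) = −[γ_t, B(t)] + d_{A(t)} β_t. -/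

import Mathlib

section aux
variable {𝔄 : Type*} [NormedRing 𝔄] [NormedAlgebra ℝ 𝔄]
  {E : Type*} [NormedAddCommGroup E] [NormedSpace ℝ E]

/-- Derivative of a pointwise two-sided inverse along a differentiable curve. -/
lemma hasDerivAt_of_inv' {f j : ℝ → 𝔄} {f' : 𝔄} {t : ℝ}
    (h1 : ∀ s, j s * f s = 1) (h2 : ∀ s, f s * j s = 1)
    (hf : HasDerivAt f f' t) :
    HasDerivAt j (-(j t * f' * j t)) t := by
  have key : ∀ s, j s - j t = -(j s * (f s - f t) * j t) := by
    intro s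
    have e : j s * (f s - f t) * j t
        = (j s * f s) * j t - j s * (f t * j t) := by noncomm_ring
    rw [e, h1 s, h2 t, one_mul, mul_one, neg_sub]
  -- continuity of j at t
  have hfc : ContinuousAt f t := hf.continuousAt
  have hjc : ContinuousAt j t := by
    have hten : Filter.Tendsto (fun s => ‖f s - f t‖) (nhds t) (nhds 0) := by
      have : ContinuousAt (fun s => ‖f s - f t‖) t :=
        (hfc.sub (continuousAt_const (y := f t))).norm
      simpa using this.tendsto
    have hev : ∀ᶠ s in nhds t, ‖f s - f t‖ * ‖j t‖ ≤ 1/2 := by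
      have := hten.eventually_le_const (show (0:ℝ) < (1/2) / (‖j t‖ + 1) by positivity)
      filter_upwards [this] with s hs
      calc ‖f s - f t‖ * ‖j t‖ ≤ ((1/2) / (‖j t‖ + 1)) * (‖j t‖ + 1) := by
            apply mul_le_mul hs (by linarith [norm_nonneg (j t)]) (norm_nonneg _) (by positivity)
          _ = 1/2 := by field_simp
    have hbound : ∀ᶠ s in nhds t, ‖j s - j t‖ ≤ 2 * ‖j t‖ * ‖j t‖ * ‖f s - f t‖ := by
      filter_upwards [hev] with s hs
      have hjsle : ‖j s‖ ≤ 2 * ‖j t‖ := by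
        have h3 : ‖j s - j t‖ ≤ ‖j s‖ * ‖f s - f t‖ * ‖j t‖ := by
          rw [key s]
          calc ‖-(j s * (f s - f t) * j t)‖ = ‖j s * (f s - f t) * j t‖ := norm_neg _
            _ ≤ ‖j s * (f s - f t)‖ * ‖j t‖ := norm_mul_le _ _
            _ ≤ ‖j s‖ * ‖f s - f t‖ * ‖j t‖ := by
                gcongr; exact norm_mul_le _ _
        have h4 : ‖j s‖ - ‖j t‖ ≤ ‖j s - j t‖ := norm_sub_norm_le _ _
        nlinarith [norm_nonneg (j s), norm_nonneg (j t), norm_nonneg (f s - f t),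
          mul_le_mul_of_nonneg_left hs (norm_nonneg (j s))]
      have h3 : ‖j s - j t‖ ≤ ‖j s‖ * ‖f s - f t‖ * ‖j t‖ := by
        rw [key s]
        calc ‖-(j s * (f s - f t) * j t)‖ = ‖j s * (f s - f t) * j t‖ := norm_neg _
          _ ≤ ‖j s * (f s - f t)‖ * ‖j t‖ := norm_mul_le _ _
          _ ≤ ‖j s‖ * ‖f s - f t‖ * ‖j t‖ := by gcongr; exact norm_mul_le _ _
      nlinarith [mul_le_mul_of_nonneg_right (mul_le_mul_of_nonneg_right hjsle (norm_nonneg (f s - f t))) (norm_nonneg (j t)), norm_nonneg (f s - f t), norm_nonneg (j t)]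
    have hz : Filter.Tendsto (fun s => j s - j t) (nhds t) (nhds 0) := by
      apply squeeze_zero_norm' hbound
      have : Filter.Tendsto (fun s => 2 * ‖j t‖ * ‖j t‖ * ‖f s - f t‖) (nhds t) (nhds (2 * ‖j t‖ * ‖j t‖ * 0)) := hten.const_mul _
      simpa using this
    have : Filter.Tendsto j (nhds t) (nhds (j t)) := by
      have := hz.add_const (j t)
      simpa using this
    exact this
  rw [hasDerivAt_iff_tendsto_slope] at hf ⊢
  have keyslope : ∀ s, slope j t s = -(j s * slope f t s * j t) := by
    intro s
    have : slope j t s = (s - t)⁻¹ • (j s - j t) := by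
      rw [slope_def_module]
    rw [this, key s, slope_def_module]
    rw [smul_neg, mul_smul_comm, smul_mul_assoc]
  have hcomb : Filter.Tendsto (fun s => -(j s * slope f t s * j t))
      (nhdsWithin t {t}ᶜ) (nhds (-(j t * f' * j t))) := by
    exact (((hjc.tendsto.mono_left nhdsWithin_le_nhds).mul hf).mul tendsto_const_nhds).neg
  exact hcomb.congr (fun s => (keyslope s).symm)


/-- Mixed partials swap: time derivative of the space derivative. -/
lemma swap_fderiv' {f h : ℝ × E → 𝔄} (hf : ContDiff ℝ 2 f)
    (hflow : ∀ (t : ℝ) (x : E), HasDerivAt (fun s => f (s, x)) (h (t, x)) t)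
    (t : ℝ) (x v : E) :
    HasDerivAt (fun s => fderiv ℝ (fun y => f (s, y)) x v)
      (fderiv ℝ (fun y => h (t, y)) x v) t := by
  have hfd : Differentiable ℝ f := hf.differentiable (by norm_num)
  set F := fderiv ℝ f with hFdef
  have hFc : ContDiff ℝ 1 F := hf.fderiv_right (by norm_num)
  have hFd : Differentiable ℝ F := hFc.differentiable (by norm_num)
  have hcurve : ∀ (x : E), HasDerivAt (fun s : ℝ => (s, x)) ((1 : ℝ), (0 : E)) t :=
    fun x => (hasDerivAt_id t).prodMk (hasDerivAt_const t x)
  set P : E →L[ℝ] ℝ × E := (0 : E →L[ℝ] ℝ).prod (ContinuousLinearMap.id ℝ E) with hPdef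
  have hsec : ∀ (s : ℝ) (y : E), HasFDerivAt (fun y : E => (s, y)) P y :=
    fun s y => (hasFDerivAt_const s y).prodMk (hasFDerivAt_id y)
  have hpart : ∀ (s : ℝ) (y : E), HasFDerivAt (fun y => f (s, y)) ((F (s, y)).comp P) y :=
    fun s y => ((hfd (s, y)).hasFDerivAt).comp y (hsec s y)
  have hfderiv_eq : ∀ (s : ℝ), fderiv ℝ (fun y => f (s, y)) x v = F (s, x) ((0 : ℝ), v) := by
    intro s
    rw [(hpart s x).fderiv]
    simp [hPdef]
  have hh : ∀ y : E, h (t, y) = F (t, y) ((1 : ℝ), (0 : E)) := by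
    intro y
    have h1 : HasDerivAt (fun s => f (s, y)) (F (t, y) ((1 : ℝ), (0 : E))) t :=
      ((hfd (t, y)).hasFDerivAt).comp_hasDerivAt t (hcurve y)
    exact (h1.unique (hflow t y)).symm
  set F'' := fderiv ℝ F (t, x) with hF''def
  have hF'at : HasFDerivAt F F'' (t, x) := (hFd (t, x)).hasFDerivAt
  have hsym : F'' ((1 : ℝ), (0 : E)) ((0 : ℝ), v) = F'' ((0 : ℝ), v) ((1 : ℝ), (0 : E)) :=
    second_derivative_symmetric (fun y => (hfd y).hasFDerivAt) hF'at _ _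
  have hL : HasDerivAt (fun s => F (s, x)) (F'' ((1 : ℝ), (0 : E))) t :=
    hF'at.comp_hasDerivAt t (hcurve x)
  have hL2 : HasDerivAt (fun s => F (s, x) ((0 : ℝ), v))
      (F'' ((1 : ℝ), (0 : E)) ((0 : ℝ), v)) t := by
    have := hL.clm_apply (hasDerivAt_const t ((0 : ℝ), v))
    simpa using this
  have hR : HasFDerivAt (fun y => F (t, y)) (F''.comp P) x :=
    hF'at.comp x (hsec t x)
  have hR2 := hR.clm_apply (hasFDerivAt_const ((1 : ℝ), (0 : E)) x)
  have hRHS : fderiv ℝ (fun y => h (t, y)) x v = F'' ((0 : ℝ), v) ((1 : ℝ), (0 : E)) := by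
    have heq : (fun y => h (t, y)) = (fun y => F (t, y) ((1 : ℝ), (0 : E))) := funext hh
    rw [heq, hR2.fderiv]
    simp [hPdef]
  rw [hRHS, ← hsym]
  have hfun : (fun s => fderiv ℝ (fun y => f (s, y)) x v)
      = fun s => F (s, x) ((0 : ℝ), v) := funext hfderiv_eq
  rw [hfun]
  exact hL2

end aux

theorem stmt11'
    {𝔄 : Type*} [NormedRing 𝔄] [NormedAlgebra ℝ 𝔄]
    {E : Type*} [NormedAddCommGroup E] [NormedSpace ℝ E]
    (γ β g τ : ℝ × E → 𝔄)
    (hγcont : Continuous γ)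
    (hγdiff : ∀ t : ℝ, Differentiable ℝ (fun x : E => γ (t, x)))
    (hβcont : Continuous β)
    (hβdiff : ∀ t : ℝ, Differentiable ℝ (fun x : E => β (t, x)))
    (hg : ContDiff ℝ 2 g)
    (hgunit : ∀ p : ℝ × E, IsUnit (g p))
    (hgflow : ∀ (t : ℝ) (x : E), HasDerivAt (fun s => g (s, x)) (g (t, x) * γ (t, x)) t)
    (hτ : ContDiff ℝ 2 τ)
    (hτflow : ∀ (t : ℝ) (x : E), HasDerivAt (fun s => τ (s, x))
      (β (t, x) - (γ (t, x) * τ (t, x) - τ (t, x) * γ (t, x))) t)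
    (A B : E → (E →L[ℝ] 𝔄)) (t : ℝ) (x : E) (v : E) :
    HasDerivAt (fun s : ℝ => Ring.inverse (g (s, x)) * (B x v) * g (s, x)
    + fderiv ℝ (fun y => τ (s, y)) x v
    + ((Ring.inverse (g (s, x)) * (A x v) * g (s, x)
    + Ring.inverse (g (s, x)) * (fderiv ℝ (fun y => g (s, y)) x v)) * τ (s, x)
      - τ (s, x) * (Ring.inverse (g (s, x)) * (A x v) * g (s, x)
    + Ring.inverse (g (s, x)) * (fderiv ℝ (fun y => g (s, y)) x v))))
      (-(γ (t, x) * (Ring.inverse (g (t, x)) * (B x v) * g (t, x)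
    + fderiv ℝ (fun y => τ (t, y)) x v
    + ((Ring.inverse (g (t, x)) * (A x v) * g (t, x)
    + Ring.inverse (g (t, x)) * (fderiv ℝ (fun y => g (t, y)) x v)) * τ (t, x)
      - τ (t, x) * (Ring.inverse (g (t, x)) * (A x v) * g (t, x)
    + Ring.inverse (g (t, x)) * (fderiv ℝ (fun y => g (t, y)) x v))))
        - (Ring.inverse (g (t, x)) * (B x v) * g (t, x)
    + fderiv ℝ (fun y => τ (t, y)) x v
    + ((Ring.inverse (g (t, x)) * (A x v) * g (t, x)
    + Ring.inverse (g (t, x)) * (fderiv ℝ (fun y => g (t, y)) x v)) * τ (t, x)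
      - τ (t, x) * (Ring.inverse (g (t, x)) * (A x v) * g (t, x)
    + Ring.inverse (g (t, x)) * (fderiv ℝ (fun y => g (t, y)) x v)))) * γ (t, x))
        + fderiv ℝ (fun y => β (t, y)) x v
        + ((Ring.inverse (g (t, x)) * (A x v) * g (t, x)
    + Ring.inverse (g (t, x)) * (fderiv ℝ (fun y => g (t, y)) x v)) * β (t, x)
          - β (t, x) * (Ring.inverse (g (t, x)) * (A x v) * g (t, x)
    + Ring.inverse (g (t, x)) * (fderiv ℝ (fun y => g (t, y)) x v))))
      t := by
  have hgd : Differentiable ℝ g := hg.differentiable (by norm_num)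
  have hτd : Differentiable ℝ τ := hτ.differentiable (by norm_num)
  have hgy : ∀ s : ℝ, Differentiable ℝ (fun y => g (s, y)) :=
    fun s => hgd.comp ((differentiable_const s).prodMk differentiable_id)
  have hτy : ∀ s : ℝ, Differentiable ℝ (fun y => τ (s, y)) :=
    fun s => hτd.comp ((differentiable_const s).prodMk differentiable_id)
  have hone : ∀ s : ℝ, Ring.inverse (g (s, x)) * g (s, x) = 1 :=
    fun s => Ring.inverse_mul_cancel _ (hgunit _)
  have hone' : ∀ s : ℝ, g (s, x) * Ring.inverse (g (s, x)) = 1 :=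
    fun s => Ring.mul_inverse_cancel _ (hgunit _)
  have c2 := hgflow t x
  have c1 : HasDerivAt (fun s => Ring.inverse (g (s, x)))
      (-(γ (t, x) * Ring.inverse (g (t, x)))) t := by
    have h := hasDerivAt_of_inv' hone hone' c2
    convert h using 2
    rw [show Ring.inverse (g (t, x)) * (g (t, x) * γ (t, x)) * Ring.inverse (g (t, x))
        = (Ring.inverse (g (t, x)) * g (t, x)) * (γ (t, x) * Ring.inverse (g (t, x))) from by
      noncomm_ring]
    rw [hone t, one_mul]
  have c3 : HasDerivAt (fun s => fderiv ℝ (fun y => g (s, y)) x v)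
      (g (t, x) * fderiv ℝ (fun y => γ (t, y)) x v
        + fderiv ℝ (fun y => g (t, y)) x v * γ (t, x)) t := by
    have hs := swap_fderiv' (h := fun p => g p * γ p) hg (fun t x => hgflow t x) t x v
    convert hs using 1
    have H := ((hgy t x).hasFDerivAt.mul' ((hγdiff t) x).hasFDerivAt)
    rw [show fderiv ℝ (fun y => g (t, y) * γ (t, y)) x = _ from H.fderiv]
    simp [smul_eq_mul]
  have c4 : HasDerivAt (fun s => fderiv ℝ (fun y => τ (s, y)) x v)
      (fderiv ℝ (fun y => β (t, y)) x v
        - (γ (t, x) * fderiv ℝ (fun y => τ (t, y)) x v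
            + fderiv ℝ (fun y => γ (t, y)) x v * τ (t, x)
          - (τ (t, x) * fderiv ℝ (fun y => γ (t, y)) x v
            + fderiv ℝ (fun y => τ (t, y)) x v * γ (t, x)))) t := by
    have hs := swap_fderiv' (h := fun p => β p - (γ p * τ p - τ p * γ p)) hτ hτflow t x v
    convert hs using 1
    have H := (((hβdiff t) x).hasFDerivAt.sub
      (((((hγdiff t) x).hasFDerivAt.mul' ((hτy t) x).hasFDerivAt)).sub
        ((((hτy t) x).hasFDerivAt.mul' ((hγdiff t) x).hasFDerivAt))))
    rw [show fderiv ℝ (fun y => β (t, y) - (γ (t, y) * τ (t, y) - τ (t, y) * γ (t, y))) x = _ from H.fderiv]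
    simp [smul_eq_mul]
  have c5 := hτflow t x
  have cA := (c1.mul (hasDerivAt_const t (A x v))).mul c2 |>.add (c1.mul c3)
  have cB := (c1.mul (hasDerivAt_const t (B x v))).mul c2
  have cMain := (cB.add c4).add ((cA.mul c5).sub (c5.mul cA))
  beta_reduce at cMain
  convert cMain using 1
  case e'_4 => rfl
  case e'_8 => rfl
  rw [show Ring.inverse (g (t, x)) * (g (t, x) * fderiv ℝ (fun y => γ (t, y)) x v
        + fderiv ℝ (fun y => g (t, y)) x v * γ (t, x))
      = fderiv ℝ (fun y => γ (t, y)) x v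
        + Ring.inverse (g (t, x)) * (fderiv ℝ (fun y => g (t, y)) x v * γ (t, x)) from by
    rw [mul_add, ← mul_assoc, hone t, one_mul]]
  simp only [Pi.mul_apply, Pi.add_apply]
  noncomm_ring



/-- The gauge transform `A^{g_t}(x)v = g⁻¹ (A(x)v) g + g⁻¹ (D_x g_t)(x)v` of a
`𝔤`-valued one-form `A` on a chart `E` by a time-dependent group-valued map `g`. -/
noncomputable def gaugeA {𝔄 E : Type*} [NormedRing 𝔄] [NormedAlgebra ℝ 𝔄]
    [NormedAddCommGroup E] [NormedSpace ℝ E]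
    (g : ℝ × E → 𝔄) (A : E → (E →L[ℝ] 𝔄)) (t : ℝ) (x : E) (v : E) : 𝔄 :=
  Ring.inverse (g (t, x)) * (A x v) * g (t, x)
    + Ring.inverse (g (t, x)) * (fderiv ℝ (fun y => g (t, y)) x v)

/-- The transformed `B`-field
`B(t) = g_t⁻¹ B g_t + d_{A^{g_t}} τ_t`, i.e.
`B(t)(x)v = g⁻¹ (B(x)v) g + (D_x τ_t)(x)v + [A^{g_t}(x)v, τ(t,x)]`. -/
noncomputable def gaugeB {𝔄 E : Type*} [NormedRing 𝔄] [NormedAlgebra ℝ 𝔄]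
    [NormedAddCommGroup E] [NormedSpace ℝ E]
    (g τ : ℝ × E → 𝔄) (A B : E → (E →L[ℝ] 𝔄)) (t : ℝ) (x : E) (v : E) : 𝔄 :=
  Ring.inverse (g (t, x)) * (B x v) * g (t, x)
    + fderiv ℝ (fun y => τ (t, y)) x v
    + (gaugeA g A t x v * τ (t, x) - τ (t, x) * gaugeA g A t x v)

/-- **Proposition `semidirectPexp` (matrix/chart version).**  Let `γ, β : ℝ × E → 𝔄` be
continuous and differentiable in the `E`-variable, let `g` be `C²` with invertible values
and `∂ₜ g = g·γ`, and let `τ` be `C²` with `∂ₜ τ = β - [γ, τ]` (the path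
`τ_t = g_t⁻¹(∫₀ᵗ g_{t'} β_{t'} g_{t'}⁻¹ dt') g_t`).  With `A(t) := A^{g_t}` and
`B(t) := g_t⁻¹ B g_t + d_{A(t)} τ_t`, one has
`Ḃ(t) = -[γ_t, B(t)] + d_{A(t)} β_t`, pointwise:
`∂ₜ(B(t)(x)v) = -[γ(t,x), B(t)(x)v] + (D_x β_t)(x)v + [A(t)(x)v, β(t,x)]`. -/
theorem stmt11
    {𝔄 : Type*} [NormedRing 𝔄] [NormedAlgebra ℝ 𝔄]
    {E : Type*} [NormedAddCommGroup E] [NormedSpace ℝ E]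
    (γ β g τ : ℝ × E → 𝔄)
    (hγcont : Continuous γ)
    (hγdiff : ∀ t : ℝ, Differentiable ℝ (fun x : E => γ (t, x)))
    (hβcont : Continuous β)
    (hβdiff : ∀ t : ℝ, Differentiable ℝ (fun x : E => β (t, x)))
    (hg : ContDiff ℝ 2 g)
    (hgunit : ∀ p : ℝ × E, IsUnit (g p))
    (hgflow : ∀ (t : ℝ) (x : E), HasDerivAt (fun s => g (s, x)) (g (t, x) * γ (t, x)) t)
    (hτ : ContDiff ℝ 2 τ)
    (hτflow : ∀ (t : ℝ) (x : E), HasDerivAt (fun s => τ (s, x))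
      (β (t, x) - (γ (t, x) * τ (t, x) - τ (t, x) * γ (t, x))) t)
    (A B : E → (E →L[ℝ] 𝔄)) (t : ℝ) (x : E) (v : E) :
    HasDerivAt (fun s : ℝ => gaugeB g τ A B s x v)
      (-(γ (t, x) * gaugeB g τ A B t x v - gaugeB g τ A B t x v * γ (t, x))
        + fderiv ℝ (fun y => β (t, y)) x v
        + (gaugeA g A t x v * β (t, x) - β (t, x) * gaugeA g A t x v))
      t := by
  simp only [gaugeB, gaugeA]
  exact stmt11' γ β g τ hγcont hγdiff hβcont hβdiff hg hgunit hgflow hτ hτflow A B t x v
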